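/- arXiv:1710.00494 — 2 statements merged into one kernel-verified Lean document; each statement's English description precedes it below -/
import Mathlib

section
/- Let (Ω, P) be a probability space and φ : Ω → P_n a measurable map such that ω ↦ log φ(ω) is Bochner integrable into the real symmetric matrices. Then λ(exp ∫_Ω log φ dP) ≺_log exp ∫_Ω log λ(φ(ω)) dP: for every k = 1, …, n, ∏_{i=1}^k λ_i(exp(∫_Ω log φ(ω) dP(ω))) ≤ ∏_{i=1}^k exp(∫_Ω log λ_i(φ(ω)) dP(ω)), with equality for k = n. -/
open Matrix BigOperators

noncomputable section

/-- Loewner order: `A ≤ B` iff `B - A` is positive semidefinite. -/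
def loewnerLE {m : ℕ} (A B : Matrix (Fin m) (Fin m) ℝ) : Prop := (B - A).PosSemidef

/-- `M(B/A) = inf {α > 0 : B ≤ α A}` (Loewner order). -/
noncomputable def Mratio {m : ℕ} (A B : Matrix (Fin m) (Fin m) ℝ) : ℝ :=
  sInf {α : ℝ | 0 < α ∧ loewnerLE B (α • A)}

/-- The Thompson metric `d_T(A,B) = max (log M(B/A)) (log M(A/B))`. -/
noncomputable def thompson {m : ℕ} (A B : Matrix (Fin m) (Fin m) ℝ) : ℝ :=
  max (Real.log (Mratio A B)) (Real.log (Mratio B A))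

/-- Eigenvalues of a (Hermitian) matrix arranged in decreasing order, counting
multiplicities; junk value `0` if the matrix is not Hermitian. -/
noncomputable def sortedEigs {m : ℕ} (A : Matrix (Fin m) (Fin m) ℝ) : Fin m → ℝ :=
  if hA : A.IsHermitian then fun i => hA.eigenvalues (Tuple.sort hA.eigenvalues i.rev)
  else fun _ => 0

/-- Functional calculus: apply `f : ℝ → ℝ` to a symmetric matrix via the spectral
decomposition; junk value `0` if the matrix is not Hermitian. -/
noncomputable def matFun {m : ℕ} (f : ℝ → ℝ) (A : Matrix (Fin m) (Fin m) ℝ) :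
    Matrix (Fin m) (Fin m) ℝ :=
  if hA : A.IsHermitian then hA.cfc f else 0

/-- Matrix logarithm via the spectral decomposition. -/
noncomputable def matLog {m : ℕ} (A : Matrix (Fin m) (Fin m) ℝ) : Matrix (Fin m) (Fin m) ℝ :=
  matFun Real.log A

/-- Matrix exponential via the spectral decomposition. -/
noncomputable def matExp {m : ℕ} (A : Matrix (Fin m) (Fin m) ℝ) : Matrix (Fin m) (Fin m) ℝ :=
  matFun Real.exp A

/-- Positive-definite square root. -/
noncomputable def pdSqrt {m : ℕ} (A : Matrix (Fin m) (Fin m) ℝ) : Matrix (Fin m) (Fin m) ℝ :=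
  matFun Real.sqrt A

/-- The inverse square root `A^{-1/2}`. -/
noncomputable def pdInvSqrt {m : ℕ} (A : Matrix (Fin m) (Fin m) ℝ) : Matrix (Fin m) (Fin m) ℝ :=
  matFun (fun x => (Real.sqrt x)⁻¹) A

/-- The real power `A^r` of a positive definite matrix via the spectral decomposition. -/
noncomputable def matPow {m : ℕ} (r : ℝ) (A : Matrix (Fin m) (Fin m) ℝ) :
    Matrix (Fin m) (Fin m) ℝ :=
  matFun (fun x => x ^ r) A

/-- Frobenius norm `(tr X²)^{1/2}` of a real symmetric matrix. -/
noncomputable def frob {m : ℕ} (X : Matrix (Fin m) (Fin m) ℝ) : ℝ :=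
  Real.sqrt ((X * X).trace)

/-- Riemannian trace distance `δ(A,B) = ‖log (A^{-1/2} B A^{-1/2})‖_F`. -/
noncomputable def riemDist {m : ℕ} (A B : Matrix (Fin m) (Fin m) ℝ) : ℝ :=
  frob (matLog (pdInvSqrt A * B * pdInvSqrt A))

/-- The standard symplectic form matrix `J = [[0, I], [-I, 0]]` of size `(n+n) × (n+n)`. -/
noncomputable def Jmat (n : ℕ) : Matrix (Fin (n + n)) (Fin (n + n)) ℝ :=
  Matrix.reindex finSumFinEquiv finSumFinEquiv (Matrix.fromBlocks 0 1 (-1) 0)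

/-- The matrix `A^{1/2} Jᵀ A J A^{1/2}`, whose eigenvalues are the squares of the
(extended) symplectic eigenvalues of `A`. -/
noncomputable def sympProd {n : ℕ} (A : Matrix (Fin (n + n)) (Fin (n + n)) ℝ) :
    Matrix (Fin (n + n)) (Fin (n + n)) ℝ :=
  pdSqrt A * (Jmat n)ᵀ * A * Jmat n * pdSqrt A

/-- The `t`-weighted geometric mean `A #_t B = A^{1/2} (A^{-1/2} B A^{-1/2})^t A^{1/2}`. -/
noncomputable def gmean {m : ℕ} (t : ℝ) (A B : Matrix (Fin m) (Fin m) ℝ) :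
    Matrix (Fin m) (Fin m) ℝ :=
  pdSqrt A * matPow t (pdInvSqrt A * B * pdInvSqrt A) * pdSqrt A

open MeasureTheory

attribute [local instance] Matrix.normedAddCommGroup Matrix.normedSpace

namespace LogMajAux

open Polynomial

lemma charpoly_diagonal_real {m : ℕ} (d : Fin m → ℝ) :
    (Matrix.diagonal d).charpoly
      = ((Finset.univ.val.map d).map fun a => X - C a).prod := by
  have h : Matrix.charmatrix (Matrix.diagonal d)
      = Matrix.diagonal fun i => (X : ℝ[X]) - C (d i) := by
    ext i j
    by_cases hij : i = j
    · subst hij; simp [Matrix.charmatrix_apply_eq]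
    · simp [Matrix.charmatrix_apply_ne _ _ _ hij, Matrix.diagonal_apply_ne _ hij]
  rw [Matrix.charpoly, h, Matrix.det_diagonal, Multiset.map_map]
  rfl

lemma charpoly_conj {m : ℕ} (U D : Matrix (Fin m) (Fin m) ℝ)
    (hU : U * star U = 1) (hU' : star U * U = 1) :
    (U * D * star U).charpoly = D.charpoly := by
  classical
  have hmap : ∀ M N : Matrix (Fin m) (Fin m) ℝ,
      (M * N).map (C : ℝ →+* ℝ[X]) = M.map C * N.map C := fun M N =>
    Matrix.map_mul
  have hone : (1 : Matrix (Fin m) (Fin m) ℝ).map (C : ℝ →+* ℝ[X]) = 1 := Matrix.map_one _ (map_zero C) (map_one C)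
  have hch : Matrix.charmatrix (U * D * star U)
      = U.map C * Matrix.charmatrix D * (star U).map C := by
    rw [Matrix.charmatrix]
    rw [Matrix.charmatrix]
    rw [Matrix.mul_sub, Matrix.sub_mul]
    congr 1
    · rw [show U.map (C : ℝ →+* ℝ[X]) * (Matrix.scalar (Fin m)) X
            = (Matrix.scalar (Fin m)) X * U.map C from
          ((Matrix.scalar_commute X (fun r => Commute.all _ _) (U.map C)).eq).symm,
        mul_assoc, ← hmap, hU, hone, mul_one]
    · rw [RingHom.mapMatrix_apply, RingHom.mapMatrix_apply, hmap, hmap]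
  have hdet1 : (U.map (C : ℝ →+* ℝ[X])).det * ((star U).map (C : ℝ →+* ℝ[X])).det = 1 := by
    rw [← Matrix.det_mul, ← hmap, hU, hone, Matrix.det_one]
  rw [Matrix.charpoly, Matrix.charpoly, hch, Matrix.det_mul, Matrix.det_mul]
  calc (U.map (C : ℝ →+* ℝ[X])).det * (Matrix.charmatrix D).det
          * ((star U).map (C : ℝ →+* ℝ[X])).det
      = (Matrix.charmatrix D).det
          * ((U.map (C : ℝ →+* ℝ[X])).det * ((star U).map (C : ℝ →+* ℝ[X])).det) := by ring
    _ = (Matrix.charmatrix D).det := by rw [hdet1, mul_one]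

lemma isHermitian_matFun {m : ℕ} (f : ℝ → ℝ) (A : Matrix (Fin m) (Fin m) ℝ) :
    (matFun f A).IsHermitian := by
  rw [matFun]
  split_ifs with hA
  · rw [Matrix.IsHermitian.cfc, Unitary.conjStarAlgAut_apply, Matrix.star_eq_conjTranspose]
    exact Matrix.isHermitian_mul_mul_conjTranspose _ (Matrix.isHermitian_diagonal _)
  · exact Matrix.isHermitian_zero

lemma cfc_real {m : ℕ} {A : Matrix (Fin m) (Fin m) ℝ} (hA : A.IsHermitian) (f : ℝ → ℝ) :
    hA.cfc f = (hA.eigenvectorUnitary : Matrix (Fin m) (Fin m) ℝ)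
      * Matrix.diagonal (f ∘ hA.eigenvalues)
      * star (hA.eigenvectorUnitary : Matrix (Fin m) (Fin m) ℝ) := by
  rw [Matrix.IsHermitian.cfc]
  rw [show RCLike.ofReal ∘ f ∘ hA.eigenvalues = f ∘ hA.eigenvalues by
    rw [RCLike.ofReal_real_eq_id, Function.id_comp]]
  rw [Unitary.conjStarAlgAut_apply]

lemma spectral_real {m : ℕ} {A : Matrix (Fin m) (Fin m) ℝ} (hA : A.IsHermitian) :
    A = (hA.eigenvectorUnitary : Matrix (Fin m) (Fin m) ℝ)
      * Matrix.diagonal hA.eigenvalues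
      * star (hA.eigenvectorUnitary : Matrix (Fin m) (Fin m) ℝ) := by
  conv_lhs => rw [hA.spectral_theorem]
  rw [show RCLike.ofReal ∘ hA.eigenvalues = hA.eigenvalues by
    rw [RCLike.ofReal_real_eq_id, Function.id_comp]]
  rw [Unitary.conjStarAlgAut_apply]

lemma charpoly_isHermitian {m : ℕ} {A : Matrix (Fin m) (Fin m) ℝ} (hA : A.IsHermitian) :
    A.charpoly = ((Finset.univ.val.map hA.eigenvalues).map fun a => X - C a).prod := by
  conv_lhs => rw [spectral_real hA]
  rw [charpoly_conj _ _ ((Matrix.mem_unitaryGroup_iff).mp hA.eigenvectorUnitary.2)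
      ((Matrix.mem_unitaryGroup_iff').mp hA.eigenvectorUnitary.2)]
  exact charpoly_diagonal_real _

lemma multiset_eigs {m : ℕ} {A : Matrix (Fin m) (Fin m) ℝ} (hA : A.IsHermitian) :
    Finset.univ.val.map hA.eigenvalues = A.charpoly.roots := by
  rw [charpoly_isHermitian hA, Polynomial.roots_multiset_prod_X_sub_C]

lemma charpoly_matFun {m : ℕ} {A : Matrix (Fin m) (Fin m) ℝ} (hA : A.IsHermitian) (f : ℝ → ℝ) :
    (matFun f A).charpoly
      = ((Finset.univ.val.map (f ∘ hA.eigenvalues)).map fun a => X - C a).prod := by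
  rw [matFun, dif_pos hA, cfc_real hA f,
    charpoly_conj _ _ ((Matrix.mem_unitaryGroup_iff).mp hA.eigenvectorUnitary.2)
      ((Matrix.mem_unitaryGroup_iff').mp hA.eigenvectorUnitary.2),
    charpoly_diagonal_real]

lemma multiset_eigs_matFun {m : ℕ} {A : Matrix (Fin m) (Fin m) ℝ} (hA : A.IsHermitian)
    (f : ℝ → ℝ) :
    Finset.univ.val.map (isHermitian_matFun f A).eigenvalues
      = Finset.univ.val.map (f ∘ hA.eigenvalues) := by
  rw [multiset_eigs, charpoly_matFun hA f, Polynomial.roots_multiset_prod_X_sub_C]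

lemma monotone_unique {m : ℕ} {v w : Fin m → ℝ} (hv : Monotone v) (hw : Monotone w)
    (h : List.Perm (List.ofFn v) (List.ofFn w)) : v = w :=
  List.ofFn_injective (List.Perm.eq_of_sortedLE hv.sortedLE_ofFn hw.sortedLE_ofFn h)

lemma perm_of_multiset_map_eq {m : ℕ} {v w : Fin m → ℝ}
    (h : Finset.univ.val.map v = Finset.univ.val.map w) :
    List.Perm (List.ofFn v) (List.ofFn w) := by
  rw [← Multiset.coe_eq_coe, ← Fin.univ_val_map, ← Fin.univ_val_map]
  exact h

lemma sortedEigs_matFun {m : ℕ} {A : Matrix (Fin m) (Fin m) ℝ} (hA : A.IsHermitian)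
    {f : ℝ → ℝ} {S : Set ℝ} (hf : StrictMonoOn f S) (hS : ∀ i, hA.eigenvalues i ∈ S) :
    sortedEigs (matFun f A) = fun i => f (sortedEigs A i) := by
  have hB : (matFun f A).IsHermitian := isHermitian_matFun f A
  have h1 : Monotone (hB.eigenvalues ∘ Tuple.sort hB.eigenvalues) := Tuple.monotone_sort _
  have h2 : Monotone (f ∘ (hA.eigenvalues ∘ Tuple.sort hA.eigenvalues)) := by
    intro i j hij
    have h5 := Tuple.monotone_sort hA.eigenvalues hij
    exact hf.monotoneOn (hS _) (hS _) h5
  have h3 : List.Perm (List.ofFn (hB.eigenvalues ∘ Tuple.sort hB.eigenvalues))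
      (List.ofFn (f ∘ (hA.eigenvalues ∘ Tuple.sort hA.eigenvalues))) := by
    have e1 := (Tuple.sort hB.eigenvalues).ofFn_comp_perm hB.eigenvalues
    have e2 := (Tuple.sort hA.eigenvalues).ofFn_comp_perm (f ∘ hA.eigenvalues)
    have e3 := perm_of_multiset_map_eq (multiset_eigs_matFun hA f)
    rw [show f ∘ (hA.eigenvalues ∘ Tuple.sort hA.eigenvalues)
        = (f ∘ hA.eigenvalues) ∘ Tuple.sort hA.eigenvalues from rfl]
    exact (e1.trans e3).trans e2.symm
  have h4 : hB.eigenvalues ∘ Tuple.sort hB.eigenvalues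
      = f ∘ (hA.eigenvalues ∘ Tuple.sort hA.eigenvalues) := monotone_unique h1 h2 h3
  funext i
  rw [sortedEigs, dif_pos hB, sortedEigs, dif_pos hA]
  exact congrFun h4 i.rev

lemma sortedEigs_antitone {m : ℕ} {A : Matrix (Fin m) (Fin m) ℝ} (hA : A.IsHermitian) :
    Antitone (sortedEigs A) := by
  intro i j hij
  rw [sortedEigs, dif_pos hA]
  exact Tuple.monotone_sort hA.eigenvalues (by rwa [Fin.rev_le_rev])

/-! ### Ky Fan machinery -/

/-- Orthonormal family predicate via dot products. -/
def onFam {m k : ℕ} (w : Fin k → Fin m → ℝ) : Prop :=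
  ∀ i j, w i ⬝ᵥ w j = if i = j then 1 else 0

/-- Sum of quadratic forms along a family. -/
def Lfun {m k : ℕ} (X : Matrix (Fin m) (Fin m) ℝ) (w : Fin k → Fin m → ℝ) : ℝ :=
  ∑ i, w i ⬝ᵥ (X *ᵥ w i)

lemma dp_eq {m : ℕ} (x y : Fin m → ℝ) : x ⬝ᵥ y = ∑ a, x a * y a := rfl

lemma sum_dp {m : ℕ} {ι : Type*} (s : Finset ι) (f : ι → Fin m → ℝ) (x : Fin m → ℝ) :
    (∑ i ∈ s, f i) ⬝ᵥ x = ∑ i ∈ s, f i ⬝ᵥ x := by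
  simp only [dp_eq, Finset.sum_apply, Finset.sum_mul]
  exact Finset.sum_comm

lemma dp_sum {m : ℕ} {ι : Type*} (s : Finset ι) (f : ι → Fin m → ℝ) (x : Fin m → ℝ) :
    x ⬝ᵥ (∑ i ∈ s, f i) = ∑ i ∈ s, x ⬝ᵥ f i := by
  simp only [dp_eq, Finset.sum_apply, Finset.mul_sum]
  exact Finset.sum_comm

lemma dp_self_nonneg {m : ℕ} (x : Fin m → ℝ) : 0 ≤ x ⬝ᵥ x :=
  Finset.sum_nonneg fun a _ => mul_self_nonneg (x a)

/-- Bessel's inequality for an orthonormal family. -/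
lemma bessel {m k : ℕ} {w : Fin k → Fin m → ℝ} (hw : onFam w) (x : Fin m → ℝ) :
    ∑ i, (w i ⬝ᵥ x) * (w i ⬝ᵥ x) ≤ x ⬝ᵥ x := by
  set t : Fin k → ℝ := fun i => w i ⬝ᵥ x with ht
  set s : Fin m → ℝ := ∑ i, t i • w i with hs
  have hxs : x ⬝ᵥ s = ∑ i, t i * t i := by
    rw [hs, dp_sum]
    refine Finset.sum_congr rfl fun i _ => ?_
    rw [dotProduct_smul, smul_eq_mul, dotProduct_comm]
  have hsx : s ⬝ᵥ x = ∑ i, t i * t i := by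
    rw [dotProduct_comm]; exact hxs
  have hss : s ⬝ᵥ s = ∑ i, t i * t i := by
    rw [hs, sum_dp]
    refine (Finset.sum_congr rfl fun i _ => ?_)
    rw [smul_dotProduct, smul_eq_mul, dp_sum]
    have : ∀ j, w i ⬝ᵥ t j • w j = t j * if i = j then 1 else 0 := fun j => by
      rw [dotProduct_smul, smul_eq_mul, hw i j]
    simp only [this]
    simp [mul_ite]
  have h0 : 0 ≤ (x - s) ⬝ᵥ (x - s) := dp_self_nonneg _
  rw [dotProduct_sub, sub_dotProduct, sub_dotProduct, hxs, hsx, hss] at h0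
  have : ∑ i, t i * t i ≤ x ⬝ᵥ x := by linarith
  exact this

section spectral
variable {m : ℕ} {A : Matrix (Fin m) (Fin m) ℝ} (hA : A.IsHermitian)

/-- `j`-th eigenvector (column of the eigenvector unitary). -/
def evec (j : Fin m) : Fin m → ℝ := fun a =>
  (hA.eigenvectorUnitary : Matrix (Fin m) (Fin m) ℝ) a j

lemma evec_on : onFam (evec hA) := by
  intro p q
  have h := congrFun (congrFun ((Matrix.mem_unitaryGroup_iff').mp hA.eigenvectorUnitary.2) p) q
  rw [Matrix.mul_apply] at h
  rw [dp_eq]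
  rw [Matrix.one_apply] at h
  rw [← h]
  refine Finset.sum_congr rfl fun a _ => ?_
  rw [Matrix.star_apply, star_trivial]
  rfl

lemma evec_complete (a b : Fin m) :
    ∑ j, evec hA j a * evec hA j b = if a = b then 1 else 0 := by
  have h := congrFun (congrFun ((Matrix.mem_unitaryGroup_iff).mp hA.eigenvectorUnitary.2) a) b
  rw [Matrix.mul_apply] at h
  rw [Matrix.one_apply] at h
  rw [← h]
  refine Finset.sum_congr rfl fun j _ => ?_
  rw [Matrix.star_apply, star_trivial]
  rfl

lemma entry_eq (a b : Fin m) :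
    A a b = ∑ j, hA.eigenvalues j * (evec hA j a * evec hA j b) := by
  conv_lhs => rw [spectral_real hA]
  rw [Matrix.mul_apply]
  refine Finset.sum_congr rfl fun j _ => ?_
  rw [Matrix.mul_diagonal, Matrix.star_apply, star_trivial]
  show (hA.eigenvectorUnitary : Matrix (Fin m) (Fin m) ℝ) a j * hA.eigenvalues j
      * (hA.eigenvectorUnitary : Matrix (Fin m) (Fin m) ℝ) b j
    = hA.eigenvalues j * (evec hA j a * evec hA j b)
  rw [evec, evec]
  ring

lemma mulVec_evec (j : Fin m) : A *ᵥ evec hA j = hA.eigenvalues j • evec hA j := by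
  have h := hA.mulVec_eigenvectorBasis j
  have he : evec hA j = ⇑(hA.eigenvectorBasis j) := by
    funext a
    rw [evec, hA.eigenvectorUnitary_apply]
  rw [he]
  exact h

/-- Quadratic form in terms of eigen-data. -/
lemma quad_form (x : Fin m → ℝ) :
    x ⬝ᵥ (A *ᵥ x) = ∑ j, hA.eigenvalues j * ((evec hA j ⬝ᵥ x) * (evec hA j ⬝ᵥ x)) := by
  have hmv : ∀ a, (A *ᵥ x) a = ∑ b, A a b * x b := fun a => rfl
  rw [dp_eq]
  simp only [hmv]
  calc ∑ a, x a * ∑ b, A a b * x b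
      = ∑ a, ∑ b, ∑ j, hA.eigenvalues j * ((evec hA j a * x a) * (evec hA j b * x b)) := by
        refine Finset.sum_congr rfl fun a _ => ?_
        rw [Finset.mul_sum]
        refine Finset.sum_congr rfl fun b _ => ?_
        rw [entry_eq hA a b, Finset.sum_mul, Finset.mul_sum]
        refine Finset.sum_congr rfl fun j _ => ?_
        ring
    _ = ∑ j, ∑ a, ∑ b, hA.eigenvalues j * ((evec hA j a * x a) * (evec hA j b * x b)) := by
        have h1 : ∀ a : Fin m,
            (∑ b, ∑ j, hA.eigenvalues j * ((evec hA j a * x a) * (evec hA j b * x b)))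
              = ∑ j, ∑ b, hA.eigenvalues j * ((evec hA j a * x a) * (evec hA j b * x b)) :=
          fun a => Finset.sum_comm
        rw [Finset.sum_congr rfl fun a _ => h1 a]
        exact Finset.sum_comm
    _ = ∑ j, hA.eigenvalues j * ((evec hA j ⬝ᵥ x) * (evec hA j ⬝ᵥ x)) := by
        refine Finset.sum_congr rfl fun j _ => ?_
        simp only [dp_eq]
        rw [Finset.sum_mul_sum, Finset.mul_sum]
        refine Finset.sum_congr rfl fun a _ => ?_
        rw [Finset.mul_sum]

lemma parseval (x : Fin m → ℝ) :
    ∑ j, (evec hA j ⬝ᵥ x) * (evec hA j ⬝ᵥ x) = x ⬝ᵥ x := by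
  simp only [dp_eq]
  calc ∑ j, (∑ a, evec hA j a * x a) * (∑ b, evec hA j b * x b)
      = ∑ j, ∑ a, ∑ b, (evec hA j a * evec hA j b) * (x a * x b) := by
        refine Finset.sum_congr rfl fun j _ => ?_
        rw [Finset.sum_mul_sum]
        refine Finset.sum_congr rfl fun a _ => ?_
        refine Finset.sum_congr rfl fun b _ => ?_
        ring
    _ = ∑ a, ∑ b, (∑ j, evec hA j a * evec hA j b) * (x a * x b) := by
        rw [Finset.sum_comm]
        refine Finset.sum_congr rfl fun a _ => ?_
        rw [Finset.sum_comm]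
        refine Finset.sum_congr rfl fun b _ => (Finset.sum_mul _ _ _).symm
    _ = ∑ a, x a * x a := by
        refine Finset.sum_congr rfl fun a _ => ?_
        simp only [evec_complete hA]
        simp [ite_mul]

end spectral

lemma filter_eq_map_castLE {m k : ℕ} (hk : k ≤ m) :
    Finset.univ.filter (fun j : Fin m => j.val < k)
      = Finset.univ.map (Fin.castLEEmb hk) := by
  ext j
  simp only [Finset.mem_filter, Finset.mem_univ, true_and, Finset.mem_map]
  constructor
  · intro hj
    exact ⟨⟨j.val, hj⟩, by ext; simp⟩
  · rintro ⟨i, rfl⟩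
    simpa using i.isLt

lemma sum_filter_lt {M : Type*} [AddCommMonoid M] {m k : ℕ} (hk : k ≤ m) (g : Fin m → M) :
    ∑ j ∈ Finset.univ.filter (fun j : Fin m => j.val < k), g j
      = ∑ i : Fin k, g (Fin.castLE hk i) := by
  rw [filter_eq_map_castLE hk, Finset.sum_map]
  rfl

lemma abel_bound {m : ℕ} {d c : Fin m → ℝ} (hd : Antitone d)
    (h0 : ∀ j, 0 ≤ c j) (h1 : ∀ j, c j ≤ 1) {k : ℕ} (hk : k ≤ m)
    (hsum : ∑ j, c j = k) :
    ∑ j, d j * c j ≤ ∑ j ∈ Finset.univ.filter (fun j : Fin m => j.val < k), d j := by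
  rcases eq_or_lt_of_le hk with heq | hlt
  · have hsz : ∑ j, (1 - c j) = 0 := by
      rw [Finset.sum_sub_distrib, hsum, heq]
      simp
    have hall : ∀ j, c j = 1 := by
      intro j
      have h := (Finset.sum_eq_zero_iff_of_nonneg
        (fun j _ => by linarith [h1 j])).mp hsz j (Finset.mem_univ j)
      linarith
    have hfil : Finset.univ.filter (fun j : Fin m => j.val < k) = Finset.univ := by
      ext j
      simp only [Finset.mem_filter, Finset.mem_univ, true_and, iff_true]
      exact heq ▸ j.isLt
    rw [hfil]
    refine le_of_eq (Finset.sum_congr rfl fun j _ => by rw [hall j, mul_one])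
  · set p : Fin m := ⟨k, hlt⟩ with hp
    set S := Finset.univ.filter (fun j : Fin m => j.val < k) with hS
    have hsplit := Finset.sum_filter_add_sum_filter_not Finset.univ
      (fun j : Fin m => j.val < k) (fun j => d j * c j)
    have hsplitc := Finset.sum_filter_add_sum_filter_not Finset.univ
      (fun j : Fin m => j.val < k) c
    have hcard : ∑ _j ∈ S, (1 : ℝ) = k := by
      rw [hS, sum_filter_lt hk]
      simp
    have hle1 : ∑ j ∈ S, d j * c j ≤ ∑ j ∈ S, (d j + d p * (c j - 1)) := by
      refine Finset.sum_le_sum fun j hj => ?_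
      have hjp : j ≤ p := by
        rw [hS] at hj
        have := (Finset.mem_filter.mp hj).2
        exact le_of_lt (by simpa [Fin.lt_def, hp] using this)
      have hdp : d p ≤ d j := hd hjp
      nlinarith [h1 j]
    have hle2 : ∑ j ∈ Finset.univ.filter (fun j : Fin m => ¬ j.val < k), d j * c j
        ≤ ∑ j ∈ Finset.univ.filter (fun j : Fin m => ¬ j.val < k), d p * c j := by
      refine Finset.sum_le_sum fun j hj => ?_
      have hpj : p ≤ j := by
        have := (Finset.mem_filter.mp hj).2
        exact by simpa [Fin.le_def, hp] using Nat.le_of_not_lt this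
      have hdp : d j ≤ d p := hd hpj
      nlinarith [h0 j]
    have e1 : ∑ j ∈ S, (d j + d p * (c j - 1)) = ∑ j ∈ S, d j + d p * (∑ j ∈ S, c j - ∑ _j ∈ S, (1:ℝ)) := by
      rw [Finset.sum_add_distrib, ← Finset.mul_sum, Finset.sum_sub_distrib]
    have e2 : ∑ j ∈ Finset.univ.filter (fun j : Fin m => ¬ j.val < k), d p * c j
        = d p * ∑ j ∈ Finset.univ.filter (fun j : Fin m => ¬ j.val < k), c j := by
      rw [Finset.mul_sum]
    calc ∑ j, d j * c j
        = ∑ j ∈ S, d j * c j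
            + ∑ j ∈ Finset.univ.filter (fun j : Fin m => ¬ j.val < k), d j * c j := hsplit.symm
      _ ≤ ∑ j ∈ S, d j + d p * (∑ j ∈ S, c j - ∑ _j ∈ S, (1:ℝ))
            + d p * ∑ j ∈ Finset.univ.filter (fun j : Fin m => ¬ j.val < k), c j := by
          rw [← e1, ← e2]; exact add_le_add hle1 hle2
      _ = ∑ j ∈ S, d j := by
          rw [hcard]
          have hck : ∑ j ∈ S, c j + ∑ j ∈ Finset.univ.filter (fun j : Fin m => ¬ j.val < k), c j
              = (k : ℝ) := by rw [hsplitc, hsum]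
          have hzero : d p * (∑ j ∈ S, c j - (k : ℝ))
              + d p * ∑ j ∈ Finset.univ.filter (fun j : Fin m => ¬ j.val < k), c j = 0 := by
            have h3 : (∑ j ∈ S, c j - (k : ℝ))
                + ∑ j ∈ Finset.univ.filter (fun j : Fin m => ¬ j.val < k), c j = 0 := by
              linarith
            calc d p * (∑ j ∈ S, c j - (k : ℝ))
                  + d p * ∑ j ∈ Finset.univ.filter (fun j : Fin m => ¬ j.val < k), c j
                = d p * ((∑ j ∈ S, c j - (k : ℝ))
                  + ∑ j ∈ Finset.univ.filter (fun j : Fin m => ¬ j.val < k), c j) := by ring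
              _ = 0 := by rw [h3, mul_zero]
          linarith

/-- The sorting permutation putting eigenvalues in decreasing order. -/
def sortPerm {m : ℕ} {A : Matrix (Fin m) (Fin m) ℝ} (hA : A.IsHermitian) :
    Equiv.Perm (Fin m) :=
  (Fin.revPerm).trans (Tuple.sort hA.eigenvalues)

lemma sortedEigs_eq_perm {m : ℕ} {A : Matrix (Fin m) (Fin m) ℝ} (hA : A.IsHermitian) (i : Fin m) :
    sortedEigs A i = hA.eigenvalues (sortPerm hA i) := by
  rw [sortedEigs, dif_pos hA]
  rfl

/-- Ky Fan: any orthonormal family gives at most the sum of the top `k` eigenvalues. -/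
lemma kyfan_le {m k : ℕ} {A : Matrix (Fin m) (Fin m) ℝ} (hA : A.IsHermitian) (hk : k ≤ m)
    {w : Fin k → Fin m → ℝ} (hw : onFam w) :
    Lfun A w ≤ ∑ j ∈ Finset.univ.filter (fun j : Fin m => j.val < k), sortedEigs A j := by
  set c : Fin m → ℝ := fun j => ∑ i, (evec hA j ⬝ᵥ w i) * (evec hA j ⬝ᵥ w i) with hc
  have hL : Lfun A w = ∑ j, hA.eigenvalues j * c j := by
    rw [Lfun]
    simp only [quad_form hA]
    rw [Finset.sum_comm]
    exact Finset.sum_congr rfl fun j _ => (Finset.mul_sum _ _ _).symm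
  have hc0 : ∀ j, 0 ≤ c j := fun j => Finset.sum_nonneg fun i _ => mul_self_nonneg _
  have hc1 : ∀ j, c j ≤ 1 := by
    intro j
    have hcomm : c j = ∑ i, (w i ⬝ᵥ evec hA j) * (w i ⬝ᵥ evec hA j) := by
      rw [hc]
      exact Finset.sum_congr rfl fun i _ => by rw [dotProduct_comm]
    have hb := bessel hw (evec hA j)
    have hee : evec hA j ⬝ᵥ evec hA j = 1 := by
      have := evec_on hA j j
      simpa using this
    rw [hcomm]
    rw [hee] at hb
    exact hb
  have hcsum : ∑ j, c j = k := by
    rw [hc]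
    rw [Finset.sum_comm]
    have : ∀ i, ∑ j, (evec hA j ⬝ᵥ w i) * (evec hA j ⬝ᵥ w i) = 1 := by
      intro i
      rw [parseval hA (w i)]
      simpa using hw i i
    simp only [this]
    simp
  have hperm : ∑ j, hA.eigenvalues j * c j
      = ∑ j, sortedEigs A j * c (sortPerm hA j) := by
    rw [← Equiv.sum_comp (sortPerm hA) (fun j => hA.eigenvalues j * c j)]
    exact Finset.sum_congr rfl fun j _ => by rw [sortedEigs_eq_perm hA]
  rw [hL, hperm]
  exact abel_bound (sortedEigs_antitone hA) (fun j => hc0 _) (fun j => hc1 _) hk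
    (by rw [Equiv.sum_comp (sortPerm hA) c, hcsum])

/-- Ky Fan: the bound is attained by the top eigenvectors. -/
lemma kyfan_attain {m k : ℕ} {A : Matrix (Fin m) (Fin m) ℝ} (hA : A.IsHermitian) (hk : k ≤ m) :
    ∃ w : Fin k → Fin m → ℝ, onFam w ∧
      Lfun A w = ∑ j ∈ Finset.univ.filter (fun j : Fin m => j.val < k), sortedEigs A j := by
  refine ⟨fun i => evec hA (sortPerm hA (Fin.castLE hk i)), ?_, ?_⟩
  · intro i j
    rw [evec_on hA]
    by_cases hij : i = j
    · subst hij; simp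
    · have : sortPerm hA (Fin.castLE hk i) ≠ sortPerm hA (Fin.castLE hk j) :=
        fun h => hij (Fin.castLE_injective hk ((sortPerm hA).injective h))
      simp [this, hij]
  · rw [Lfun, sum_filter_lt hk]
    refine Finset.sum_congr rfl fun i _ => ?_
    rw [mulVec_evec hA, dotProduct_smul, smul_eq_mul, sortedEigs_eq_perm hA]
    have hee : evec hA (sortPerm hA (Fin.castLE hk i)) ⬝ᵥ evec hA (sortPerm hA (Fin.castLE hk i)) = 1 := by
      simpa using evec_on hA (sortPerm hA (Fin.castLE hk i)) (sortPerm hA (Fin.castLE hk i))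
    rw [hee, mul_one]

section FkSec

attribute [local instance] Matrix.normedAddCommGroup Matrix.normedSpace

variable {m k : ℕ}

/-- The set of orthonormal `k`-families in `ℝ^m`. -/
def frameSet (m k : ℕ) : Set (Fin k → Fin m → ℝ) := {w | onFam w}

/-- Sup of `Lfun X` over orthonormal families: for Hermitian `X` this is the sum of
the largest `k` eigenvalues. -/
def Fk (k : ℕ) {m : ℕ} (X : Matrix (Fin m) (Fin m) ℝ) : ℝ :=
  sSup (Lfun X '' frameSet m k)

lemma abs_dp_mulVec_le (X : Matrix (Fin m) (Fin m) ℝ) {w : Fin m → ℝ}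
    (hw : w ⬝ᵥ w = 1) : |w ⬝ᵥ (X *ᵥ w)| ≤ m * ‖X‖ := by
  have hterm : ∀ a b, |w a * (X a b * w b)| ≤ |w a| * ‖X‖ * |w b| := by
    intro a b
    rw [abs_mul, abs_mul]
    have hXab : |X a b| ≤ ‖X‖ := X.norm_entry_le_entrywise_sup_norm
    have h1 : |X a b| * |w b| ≤ ‖X‖ * |w b| :=
      mul_le_mul_of_nonneg_right hXab (abs_nonneg _)
    calc |w a| * (|X a b| * |w b|) ≤ |w a| * (‖X‖ * |w b|) :=
          mul_le_mul_of_nonneg_left h1 (abs_nonneg _)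
      _ = |w a| * ‖X‖ * |w b| := by ring
  have h1 : |w ⬝ᵥ (X *ᵥ w)| ≤ ∑ a, ∑ b, |w a| * ‖X‖ * |w b| := by
    rw [dp_eq]
    refine (Finset.abs_sum_le_sum_abs _ _).trans ?_
    refine Finset.sum_le_sum fun a _ => ?_
    have : (X *ᵥ w) a = ∑ b, X a b * w b := rfl
    rw [this, Finset.mul_sum]
    refine (Finset.abs_sum_le_sum_abs _ _).trans ?_
    exact Finset.sum_le_sum fun b _ => hterm a b
  have h2 : ∑ a, ∑ b, |w a| * ‖X‖ * |w b| = ‖X‖ * ((∑ a, |w a|) * (∑ a, |w a|)) := by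
    calc ∑ a, ∑ b, |w a| * ‖X‖ * |w b|
        = ∑ a, |w a| * ‖X‖ * ∑ b, |w b| :=
          Finset.sum_congr rfl fun a _ => by rw [Finset.mul_sum]
      _ = (∑ a, |w a|) * ‖X‖ * ∑ b, |w b| := by rw [← Finset.sum_mul, ← Finset.sum_mul]
      _ = ‖X‖ * ((∑ a, |w a|) * (∑ a, |w a|)) := by ring
  have h3 : (∑ a, |w a|) * (∑ a, |w a|) ≤ (m : ℝ) := by
    have hsq := sq_sum_le_card_mul_sum_sq (s := (Finset.univ : Finset (Fin m)))
      (f := fun a => |w a|)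
    have hsum : ∑ a, |w a| ^ 2 = 1 := by
      rw [← hw, dp_eq]
      exact Finset.sum_congr rfl fun a _ => by rw [sq_abs, sq]
    rw [hsum, mul_one] at hsq
    simpa [sq] using hsq
  refine h1.trans ?_
  rw [h2]
  have hnn : 0 ≤ ‖X‖ := norm_nonneg X
  calc ‖X‖ * ((∑ a, |w a|) * (∑ a, |w a|))
      ≤ ‖X‖ * m := mul_le_mul_of_nonneg_left h3 hnn
    _ = m * ‖X‖ := by ring

lemma abs_Lfun_le (X : Matrix (Fin m) (Fin m) ℝ) {w : Fin k → Fin m → ℝ}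
    (hw : onFam w) : |Lfun X w| ≤ (k : ℝ) * m * ‖X‖ := by
  rw [Lfun]
  refine (Finset.abs_sum_le_sum_abs _ _).trans ?_
  have h1 : ∀ i : Fin k, |w i ⬝ᵥ (X *ᵥ w i)| ≤ (m : ℝ) * ‖X‖ := fun i =>
    abs_dp_mulVec_le X (by simpa using hw i i)
  calc ∑ i : Fin k, |w i ⬝ᵥ (X *ᵥ w i)| ≤ ∑ _i : Fin k, (m : ℝ) * ‖X‖ :=
        Finset.sum_le_sum fun i _ => h1 i
    _ = (k : ℝ) * m * ‖X‖ := by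
        rw [Finset.sum_const]
        simp [mul_assoc]

/-- The standard orthonormal family. -/
def stdFrame (hk : k ≤ m) : Fin k → Fin m → ℝ := fun i a =>
  if a = Fin.castLE hk i then 1 else 0

lemma stdFrame_on (hk : k ≤ m) : onFam (stdFrame hk) := by
  intro i j
  by_cases hij : i = j
  · subst hij
    rw [dp_eq]
    simp [stdFrame, ite_mul]
  · have hne : Fin.castLE hk i ≠ Fin.castLE hk j := fun h => hij (Fin.castLE_injective hk h)
    rw [dp_eq]
    rw [if_neg hij]
    refine Finset.sum_eq_zero fun a _ => ?_
    rw [stdFrame, stdFrame]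
    by_cases ha : a = Fin.castLE hk i
    · subst ha
      rw [if_neg hne, mul_zero]
    · rw [if_neg ha, zero_mul]

lemma frameSet_nonempty {X : Matrix (Fin m) (Fin m) ℝ} (hk : k ≤ m) :
    (Lfun X '' frameSet m k).Nonempty :=
  ⟨_, ⟨stdFrame hk, stdFrame_on hk, rfl⟩⟩

lemma Fk_bddAbove (X : Matrix (Fin m) (Fin m) ℝ) : BddAbove (Lfun X '' frameSet m k) := by
  refine ⟨(k : ℝ) * m * ‖X‖, ?_⟩
  rintro r ⟨w, hw, rfl⟩
  exact (abs_le.mp (abs_Lfun_le X hw)).2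

lemma le_Fk {X : Matrix (Fin m) (Fin m) ℝ} {w : Fin k → Fin m → ℝ} (hw : onFam w) :
    Lfun X w ≤ Fk k X :=
  le_csSup (Fk_bddAbove X) ⟨w, hw, rfl⟩

lemma Fk_le {X : Matrix (Fin m) (Fin m) ℝ} (hk : k ≤ m) {B : ℝ}
    (h : ∀ w : Fin k → Fin m → ℝ, onFam w → Lfun X w ≤ B) : Fk k X ≤ B := by
  refine csSup_le (frameSet_nonempty hk) ?_
  rintro r ⟨w, hw, rfl⟩
  exact h w hw

lemma abs_Fk_le (hk : k ≤ m) (X : Matrix (Fin m) (Fin m) ℝ) :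
    |Fk k X| ≤ (k : ℝ) * m * ‖X‖ := by
  rw [abs_le]
  constructor
  · have h1 : -((k : ℝ) * m * ‖X‖) ≤ Lfun X (stdFrame hk) :=
      (abs_le.mp (abs_Lfun_le X (stdFrame_on hk))).1
    exact h1.trans (le_Fk (stdFrame_on hk))
  · exact Fk_le hk fun w hw => (abs_le.mp (abs_Lfun_le X hw)).2

lemma Lfun_sub (X Y : Matrix (Fin m) (Fin m) ℝ) (w : Fin k → Fin m → ℝ) :
    Lfun (X - Y) w = Lfun X w - Lfun Y w := by
  rw [Lfun, Lfun, Lfun, ← Finset.sum_sub_distrib]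
  refine Finset.sum_congr rfl fun i _ => ?_
  rw [Matrix.sub_mulVec, dotProduct_sub]

lemma Fk_sub_le (hk : k ≤ m) (X Y : Matrix (Fin m) (Fin m) ℝ) :
    Fk k X - Fk k Y ≤ (k : ℝ) * m * ‖X - Y‖ := by
  rw [sub_le_iff_le_add]
  refine Fk_le hk fun w hw => ?_
  have h1 : Lfun X w = Lfun Y w + Lfun (X - Y) w := by rw [Lfun_sub]; ring
  have h2 : Lfun (X - Y) w ≤ (k : ℝ) * m * ‖X - Y‖ := (abs_le.mp (abs_Lfun_le _ hw)).2
  have h3 : Lfun Y w ≤ Fk k Y := le_Fk hw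
  rw [h1]
  linarith

lemma continuous_Fk (hk : k ≤ m) : Continuous (fun X : Matrix (Fin m) (Fin m) ℝ => Fk k X) := by
  have hlip : LipschitzWith ((k * m : ℕ) : NNReal)
      (fun X : Matrix (Fin m) (Fin m) ℝ => Fk k X) := by
    refine LipschitzWith.of_dist_le_mul fun X Y => ?_
    rw [Real.dist_eq, dist_eq_norm]
    have hc : (((k * m : ℕ) : NNReal) : ℝ) = (k : ℝ) * m := by push_cast; ring
    rw [hc, abs_le]
    constructor
    · have h := Fk_sub_le hk Y X
      rw [show ‖Y - X‖ = ‖X - Y‖ from norm_sub_rev Y X] at h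
      linarith
    · have h := Fk_sub_le hk X Y
      linarith
  exact hlip.continuous

/-- Ky Fan's maximum principle. -/
lemma Fk_eq_sum_sortedEigs {A : Matrix (Fin m) (Fin m) ℝ} (hA : A.IsHermitian) (hk : k ≤ m) :
    Fk k A = ∑ j ∈ Finset.univ.filter (fun j : Fin m => j.val < k), sortedEigs A j := by
  refine le_antisymm (Fk_le hk fun w hw => kyfan_le hA hk hw) ?_
  obtain ⟨w, hw, hweq⟩ := kyfan_attain hA hk
  rw [← hweq]
  exact le_Fk hw

end FkSec

lemma sum_lt_succ {M : Type*} [AddCommMonoid M] {m : ℕ} (g : Fin m → M) (i : Fin m) :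
    ∑ j ∈ Finset.univ.filter (fun j : Fin m => j.val < i.val + 1), g j
      = g i + ∑ j ∈ Finset.univ.filter (fun j : Fin m => j.val < i.val), g j := by
  have hins : Finset.univ.filter (fun j : Fin m => j.val < i.val + 1)
      = insert i (Finset.univ.filter (fun j : Fin m => j.val < i.val)) := by
    ext j
    simp only [Finset.mem_filter, Finset.mem_univ, true_and, Finset.mem_insert]
    rw [Nat.lt_succ_iff_lt_or_eq, or_comm, Fin.ext_iff]
  rw [hins, Finset.sum_insert (by simp)]

section Integration

attribute [local instance] Matrix.normedAddCommGroup Matrix.normedSpace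

open MeasureTheory

variable {m : ℕ}

lemma sortedEigs_eq_Fk_sub {X : Matrix (Fin m) (Fin m) ℝ} (hX : X.IsHermitian) (i : Fin m) :
    sortedEigs X i = Fk (i.val + 1) X - Fk i.val X := by
  rw [Fk_eq_sum_sortedEigs hX (Nat.succ_le_of_lt i.isLt),
    Fk_eq_sum_sortedEigs hX (le_of_lt i.isLt), sum_lt_succ]
  ring

lemma abs_sortedEigs_le {X : Matrix (Fin m) (Fin m) ℝ} (hX : X.IsHermitian) (i : Fin m) :
    |sortedEigs X i| ≤ 2 * m * m * ‖X‖ := by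
  rw [sortedEigs_eq_Fk_sub hX i]
  have h1 := abs_Fk_le (Nat.succ_le_of_lt i.isLt) X
  have h2 := abs_Fk_le (le_of_lt i.isLt) X
  have hi1 : ((i.val + 1 : ℕ) : ℝ) ≤ (m : ℝ) := by exact_mod_cast Nat.succ_le_of_lt i.isLt
  have hi2 : ((i.val : ℕ) : ℝ) ≤ (m : ℝ) := by exact_mod_cast le_of_lt i.isLt
  have hnn : (0 : ℝ) ≤ (m : ℝ) * ‖X‖ := mul_nonneg (Nat.cast_nonneg m) (norm_nonneg X)
  have h1' : |Fk (i.val + 1) X| ≤ (m : ℝ) * m * ‖X‖ := by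
    refine h1.trans ?_
    calc ((i.val + 1 : ℕ) : ℝ) * m * ‖X‖ = ((i.val + 1 : ℕ) : ℝ) * (m * ‖X‖) := by
          push_cast; ring
      _ ≤ (m : ℝ) * (m * ‖X‖) := mul_le_mul_of_nonneg_right (by push_cast at hi1 ⊢; linarith) hnn
      _ = (m : ℝ) * m * ‖X‖ := by ring
  have h2' : |Fk i.val X| ≤ (m : ℝ) * m * ‖X‖ := by
    refine h2.trans ?_
    calc ((i.val : ℕ) : ℝ) * m * ‖X‖ = ((i.val : ℕ) : ℝ) * (m * ‖X‖) := by ring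
      _ ≤ (m : ℝ) * (m * ‖X‖) := mul_le_mul_of_nonneg_right hi2 hnn
      _ = (m : ℝ) * m * ‖X‖ := by ring
  calc |Fk (i.val + 1) X - Fk i.val X| ≤ |Fk (i.val + 1) X| + |Fk i.val X| := abs_sub _ _
    _ ≤ (m : ℝ) * m * ‖X‖ + (m : ℝ) * m * ‖X‖ := add_le_add h1' h2'
    _ = 2 * m * m * ‖X‖ := by ring

variable {Ω : Type*} [MeasurableSpace Ω] {P : Measure Ω}

/-- Entry evaluation as a continuous linear map. -/
def entryCLM (a b : Fin m) : Matrix (Fin m) (Fin m) ℝ →L[ℝ] ℝ :=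
  LinearMap.mkContinuous
    { toFun := fun X => X a b
      map_add' := fun X Y => rfl
      map_smul' := fun c X => rfl } 1
    (fun X => by
      show ‖X a b‖ ≤ 1 * ‖X‖
      rw [one_mul, Real.norm_eq_abs]
      exact X.norm_entry_le_entrywise_sup_norm)

variable {Xf : Ω → Matrix (Fin m) (Fin m) ℝ}

lemma integrable_entry (hint : Integrable (ε := Fin m → Fin m → ℝ) Xf P) (a b : Fin m) :
    Integrable (fun ω => Xf ω a b) P :=
  (entryCLM a b).integrable_comp hint

lemma integral_entry (hint : Integrable (ε := Fin m → Fin m → ℝ) Xf P) (a b : Fin m) :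
    (∫ ω, Xf ω ∂P) a b = ∫ ω, Xf ω a b ∂P :=
  ((entryCLM a b).integral_comp_comm hint).symm

lemma isHermitian_integral (hint : Integrable (ε := Fin m → Fin m → ℝ) Xf P) (hH : ∀ ω, (Xf ω).IsHermitian) :
    (∫ ω, Xf ω ∂P).IsHermitian := by
  refine Matrix.ext fun a b => ?_
  rw [Matrix.conjTranspose_apply, star_trivial, integral_entry hint, integral_entry hint]
  refine integral_congr_ae (Filter.Eventually.of_forall fun ω => ?_)
  have h := hH ω
  calc Xf ω b a = star (Xf ω b a) := (star_trivial _).symm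
    _ = (Xf ω)ᴴ a b := (Matrix.conjTranspose_apply _ _ _).symm
    _ = Xf ω a b := by rw [h]

lemma Lfun_eq_sum {k : ℕ} (X : Matrix (Fin m) (Fin m) ℝ) (w : Fin k → Fin m → ℝ) :
    Lfun X w = ∑ i, ∑ a, ∑ b, w i a * w i b * X a b := by
  rw [Lfun]
  refine Finset.sum_congr rfl fun i _ => ?_
  rw [dp_eq]
  refine Finset.sum_congr rfl fun a _ => ?_
  have : (X *ᵥ w i) a = ∑ b, X a b * w i b := rfl
  rw [this, Finset.mul_sum]
  exact Finset.sum_congr rfl fun b _ => by ring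

lemma integrable_Lfun {k : ℕ} (hint : Integrable (ε := Fin m → Fin m → ℝ) Xf P) (w : Fin k → Fin m → ℝ) :
    Integrable (fun ω => Lfun (Xf ω) w) P := by
  have h : (fun ω => Lfun (Xf ω) w)
      = fun ω => ∑ i, ∑ a, ∑ b, w i a * w i b * Xf ω a b := by
    funext ω; exact Lfun_eq_sum _ w
  rw [h]
  refine integrable_finset_sum _ fun i _ => ?_
  refine integrable_finset_sum _ fun a _ => ?_
  refine integrable_finset_sum _ fun b _ => ?_
  exact (integrable_entry hint a b).const_mul _

lemma integral_Lfun {k : ℕ} (hint : Integrable (ε := Fin m → Fin m → ℝ) Xf P) (w : Fin k → Fin m → ℝ) :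
    ∫ ω, Lfun (Xf ω) w ∂P = Lfun (∫ ω, Xf ω ∂P) w := by
  have h : (fun ω => Lfun (Xf ω) w)
      = fun ω => ∑ i, ∑ a, ∑ b, w i a * w i b * Xf ω a b := by
    funext ω; exact Lfun_eq_sum _ w
  rw [h, Lfun_eq_sum]
  rw [integral_finset_sum _ fun i _ => (integrable_finset_sum _ fun a _ =>
    integrable_finset_sum _ fun b _ => (integrable_entry hint a b).const_mul _)]
  refine Finset.sum_congr rfl fun i _ => ?_
  rw [integral_finset_sum _ fun a _ =>
    (integrable_finset_sum _ fun b _ => (integrable_entry hint a b).const_mul _)]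
  refine Finset.sum_congr rfl fun a _ => ?_
  rw [integral_finset_sum _ fun b _ => (integrable_entry hint a b).const_mul _]
  refine Finset.sum_congr rfl fun b _ => ?_
  rw [integral_const_mul, integral_entry hint]

lemma aesm_sortedEigs (hint : Integrable (ε := Fin m → Fin m → ℝ) Xf P) (hH : ∀ ω, (Xf ω).IsHermitian) (i : Fin m) :
    AEStronglyMeasurable (fun ω => sortedEigs (Xf ω) i) P := by
  have h : (fun ω => sortedEigs (Xf ω) i)
      = fun ω => Fk (i.val + 1) (Xf ω) - Fk i.val (Xf ω) := by
    funext ω; exact sortedEigs_eq_Fk_sub (hH ω) i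
  rw [h]
  exact ((continuous_Fk (Nat.succ_le_of_lt i.isLt)).comp_aestronglyMeasurable
    hint.aestronglyMeasurable).sub
    ((continuous_Fk (le_of_lt i.isLt)).comp_aestronglyMeasurable hint.aestronglyMeasurable)

lemma integrable_sortedEigs (hint : Integrable (ε := Fin m → Fin m → ℝ) Xf P) (hH : ∀ ω, (Xf ω).IsHermitian) (i : Fin m) :
    Integrable (fun ω => sortedEigs (Xf ω) i) P := by
  refine Integrable.mono' (hint.norm.const_mul (2 * m * m)) (aesm_sortedEigs hint hH i)
    (Filter.Eventually.of_forall fun ω => ?_)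
  rw [Real.norm_eq_abs]
  exact abs_sortedEigs_le (hH ω) i

/-- The key Jensen-type inequality. -/
lemma key_ineq [IsProbabilityMeasure P] (hint : Integrable (ε := Fin m → Fin m → ℝ) Xf P)
    (hH : ∀ ω, (Xf ω).IsHermitian) {k : ℕ} (hk : k ≤ m) :
    ∑ j ∈ Finset.univ.filter (fun j : Fin m => j.val < k), sortedEigs (∫ ω, Xf ω ∂P) j
      ≤ ∑ j ∈ Finset.univ.filter (fun j : Fin m => j.val < k),
          ∫ ω, sortedEigs (Xf ω) j ∂P := by
  have hB0H : (∫ ω, Xf ω ∂P).IsHermitian := isHermitian_integral hint hH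
  obtain ⟨w, hw, hweq⟩ := kyfan_attain hB0H hk
  rw [← hweq, ← integral_Lfun hint w,
    ← integral_finset_sum _ fun j _ => integrable_sortedEigs hint hH j]
  refine integral_mono (integrable_Lfun hint w)
    (integrable_finset_sum _ fun j _ => integrable_sortedEigs hint hH j)
    (fun ω => kyfan_le (hH ω) hk hw)

lemma sum_eigs_eq_trace {A : Matrix (Fin m) (Fin m) ℝ} (hA : A.IsHermitian) :
    ∑ i, hA.eigenvalues i = A.trace := by
  conv_rhs => rw [spectral_real hA]
  rw [Matrix.trace_mul_cycle,
    (Matrix.mem_unitaryGroup_iff').mp hA.eigenvectorUnitary.2, Matrix.one_mul,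
    Matrix.trace_diagonal]

lemma sum_sortedEigs_eq_trace {A : Matrix (Fin m) (Fin m) ℝ} (hA : A.IsHermitian) :
    ∑ i, sortedEigs A i = A.trace := by
  rw [← sum_eigs_eq_trace hA, ← Equiv.sum_comp (sortPerm hA) hA.eigenvalues]
  exact Finset.sum_congr rfl fun i _ => sortedEigs_eq_perm hA i

lemma integral_trace (hint : Integrable (ε := Fin m → Fin m → ℝ) Xf P) :
    ∫ ω, (Xf ω).trace ∂P = (∫ ω, Xf ω ∂P).trace := by
  have h : ∀ X : Matrix (Fin m) (Fin m) ℝ, X.trace = ∑ a, X a a := fun X => rfl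
  simp only [h]
  rw [integral_finset_sum _ fun a _ => integrable_entry hint a a]
  exact Finset.sum_congr rfl fun a _ => (integral_entry hint a a).symm

end Integration

end LogMajAux

/-- for a measurable `φ : Ω → P_n` with `ω ↦ log φ(ω)` Bochner integrable,
`λ(exp ∫ log φ dP) ≺_log exp ∫ log λ(φ(ω)) dP`: for every `k ≤ n`,
`∏_{i<k} λ_i(exp ∫ log φ dP) ≤ ∏_{i<k} exp(∫ log λ_i(φ(ω)) dP)`, with equality at `k = n`. -/
theorem log_majorization_exp_integral_log
    (n : ℕ) {Ω : Type*} [MeasurableSpace Ω] (P : Measure Ω) [IsProbabilityMeasure P]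
    (φ : Ω → Matrix (Fin n) (Fin n) ℝ)
    (hpos : ∀ ω, (φ ω).PosDef)
    (hint : Integrable (ε := Fin n → Fin n → ℝ) (fun ω => matLog (φ ω)) P) :
    (∀ k : ℕ, k ≤ n →
      ∏ i ∈ Finset.univ.filter (fun i : Fin n => i.val < k),
          sortedEigs (matExp (∫ ω, matLog (φ ω) ∂P)) i
        ≤ ∏ i ∈ Finset.univ.filter (fun i : Fin n => i.val < k),
            Real.exp (∫ ω, Real.log (sortedEigs (φ ω) i) ∂P)) ∧
    (∏ i : Fin n, sortedEigs (matExp (∫ ω, matLog (φ ω) ∂P)) i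
      = ∏ i : Fin n, Real.exp (∫ ω, Real.log (sortedEigs (φ ω) i) ∂P)) := by
  classical
  have hH : ∀ ω, (matLog (φ ω)).IsHermitian := fun ω => LogMajAux.isHermitian_matFun _ _
  have hint' : Integrable (ε := Fin n → Fin n → ℝ) (fun ω => matFun Real.log (φ ω)) P := hint
  have hB0H : (∫ ω, matLog (φ ω) ∂P).IsHermitian := LogMajAux.isHermitian_integral hint hH
  have hexp : sortedEigs (matExp (∫ ω, matLog (φ ω) ∂P))
      = fun i => Real.exp (sortedEigs (∫ ω, matLog (φ ω) ∂P) i) :=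
    LogMajAux.sortedEigs_matFun hB0H (S := Set.univ)
      (Real.exp_strictMono.strictMonoOn _) (fun i => Set.mem_univ _)
  have hlog : ∀ ω (i : Fin n), Real.log (sortedEigs (φ ω) i) = sortedEigs (matLog (φ ω)) i := by
    intro ω i
    have h := LogMajAux.sortedEigs_matFun (hpos ω).1 (S := Set.Ioi 0)
      Real.strictMonoOn_log (fun j => Set.mem_Ioi.mpr ((hpos ω).eigenvalues_pos j))
    exact (congrFun h i).symm
  have hgint : ∀ i : Fin n, Integrable (fun ω => sortedEigs (matLog (φ ω)) i) P :=
    fun i => LogMajAux.integrable_sortedEigs hint hH i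
  constructor
  · intro k hk
    have hkey := LogMajAux.key_ineq hint hH hk
    calc ∏ i ∈ Finset.univ.filter (fun i : Fin n => i.val < k),
            sortedEigs (matExp (∫ ω, matLog (φ ω) ∂P)) i
        = ∏ i ∈ Finset.univ.filter (fun i : Fin n => i.val < k),
            Real.exp (sortedEigs (∫ ω, matLog (φ ω) ∂P) i) := by rw [hexp]
      _ = Real.exp (∑ i ∈ Finset.univ.filter (fun i : Fin n => i.val < k),
            sortedEigs (∫ ω, matLog (φ ω) ∂P) i) := (Real.exp_sum _ _).symm
      _ ≤ Real.exp (∑ i ∈ Finset.univ.filter (fun i : Fin n => i.val < k),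
            ∫ ω, sortedEigs (matLog (φ ω)) i ∂P) := Real.exp_le_exp.mpr hkey
      _ = ∏ i ∈ Finset.univ.filter (fun i : Fin n => i.val < k),
            Real.exp (∫ ω, sortedEigs (matLog (φ ω)) i ∂P) := Real.exp_sum _ _
      _ = ∏ i ∈ Finset.univ.filter (fun i : Fin n => i.val < k),
            Real.exp (∫ ω, Real.log (sortedEigs (φ ω) i) ∂P) := by
          refine Finset.prod_congr rfl fun i _ => ?_
          congr 1
          refine integral_congr_ae (Filter.Eventually.of_forall fun ω => (hlog ω i).symm)
  · have htr : ∑ i, sortedEigs (∫ ω, matLog (φ ω) ∂P) i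
        = ∑ i, ∫ ω, sortedEigs (matLog (φ ω)) i ∂P := by
      rw [LogMajAux.sum_sortedEigs_eq_trace hB0H, ← LogMajAux.integral_trace hint,
        ← integral_finset_sum _ fun i _ => hgint i]
      refine integral_congr_ae (Filter.Eventually.of_forall fun ω => ?_)
      exact (LogMajAux.sum_sortedEigs_eq_trace (hH ω)).symm
    calc ∏ i : Fin n, sortedEigs (matExp (∫ ω, matLog (φ ω) ∂P)) i
        = ∏ i : Fin n, Real.exp (sortedEigs (∫ ω, matLog (φ ω) ∂P) i) := by rw [hexp]
      _ = Real.exp (∑ i : Fin n, sortedEigs (∫ ω, matLog (φ ω) ∂P) i) := (Real.exp_sum _ _).symm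
      _ = Real.exp (∑ i : Fin n, ∫ ω, sortedEigs (matLog (φ ω)) i ∂P) := by rw [htr]
      _ = ∏ i : Fin n, Real.exp (∫ ω, sortedEigs (matLog (φ ω)) i ∂P) := Real.exp_sum _ _
      _ = ∏ i : Fin n, Real.exp (∫ ω, Real.log (sortedEigs (φ ω) i) ∂P) := by
          refine Finset.prod_congr rfl fun i _ => ?_
          congr 1
          refine integral_congr_ae (Filter.Eventually.of_forall fun ω => (hlog ω i).symm)
end
end

section
/- For A_1, …, A_m ∈ P_n, λ(exp((1/m) ∑_{j=1}^m log A_j)) ≺_log the entrywise geometric mean of the eigenvalue vectors: for every k = 1, …, n, ∏_{i=1}^k λ_i(exp((1/m) ∑_{j=1}^m log A_j)) ≤ ∏_{i=1}^k ∏_{j=1}^m λ_i(A_j)^{1/m}, with equality for k = n. -/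
open Matrix BigOperators

noncomputable section

namespace KyFanAux
open Matrix Polynomial BigOperators Finset

variable {N : ℕ}

theorem charpoly_conj (U : Matrix.unitaryGroup (Fin N) ℝ) (M : Matrix (Fin N) (Fin N) ℝ) :
    ((U : Matrix (Fin N) (Fin N) ℝ) * M * star (U : Matrix (Fin N) (Fin N) ℝ)).charpoly
      = M.charpoly := by
  set P := (U : Matrix (Fin N) (Fin N) ℝ)
  have hPQ : P * star P = 1 := Unitary.mul_star_self_of_mem U.2
  have hQP : star P * P = 1 := Unitary.star_mul_self_of_mem U.2
  have hmap : P.map ⇑C * (star P).map ⇑C = 1 := by rw [← Matrix.map_mul, hPQ]; simp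
  have hmap2 : (star P).map ⇑C * P.map ⇑C = 1 := by rw [← Matrix.map_mul, hQP]; simp
  have hcm : charmatrix (P * M * star P) = P.map ⇑C * charmatrix M * (star P).map ⇑C := by
    rw [charmatrix, charmatrix, Matrix.mul_sub, Matrix.sub_mul]
    simp only [RingHom.mapMatrix_apply]
    rw [← Matrix.map_mul, ← Matrix.map_mul]
    congr 1
    symm
    rw [← (Matrix.scalar_commute (X : ℝ[X]) (fun r => Commute.all X r) (P.map ⇑C)).eq,
      Matrix.mul_assoc, hmap, Matrix.mul_one]
  rw [Matrix.charpoly, Matrix.charpoly, hcm, det_mul, det_mul, mul_comm, ← mul_assoc, ← det_mul,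
    hmap2, det_one, one_mul]

theorem charpoly_diag (d : Fin N → ℝ) :
    (Matrix.diagonal d).charpoly = ((Finset.univ.val.map d).map fun a => X - C a).prod := by
  rw [Matrix.charpoly_of_upperTriangular _ (Matrix.blockTriangular_diagonal d)]
  rw [Finset.prod_eq_multiset_prod]
  simp [Multiset.map_map, Function.comp_def]

theorem eig_multiset {M : Matrix (Fin N) (Fin N) ℝ} (hM : M.IsHermitian)
    (U : Matrix.unitaryGroup (Fin N) ℝ) (d : Fin N → ℝ)
    (h : M = (U : Matrix (Fin N) (Fin N) ℝ) * Matrix.diagonal d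
        * star (U : Matrix (Fin N) (Fin N) ℝ)) :
    Finset.univ.val.map hM.eigenvalues = Finset.univ.val.map d := by
  have h1 : M.charpoly = ((Finset.univ.val.map d).map fun a => X - C a).prod := by
    rw [h, charpoly_conj, charpoly_diag]
  have h2 : M.charpoly = ((Finset.univ.val.map hM.eigenvalues).map fun a => X - C a).prod := by
    have hs := hM.spectral_theorem
    simp only [RCLike.ofReal_real_eq_id, Function.id_comp, Unitary.conjStarAlgAut_apply] at hs
    conv_lhs => rw [hs]
    rw [charpoly_conj, charpoly_diag]
  have := congrArg Polynomial.roots (h2.symm.trans h1)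
  rwa [Polynomial.roots_multiset_prod_X_sub_C, Polynomial.roots_multiset_prod_X_sub_C] at this

theorem antitone_unique {u v : Fin N → ℝ} (hu : Antitone u) (hv : Antitone v)
    (h : Finset.univ.val.map u = Finset.univ.val.map v) : u = v := by
  have key : ∀ w : Fin N → ℝ, Finset.univ.val.map w = ↑(List.ofFn w) := by
    intro w
    rw [List.ofFn_eq_map, ← Multiset.map_coe]
    congr 1
  rw [key, key, Multiset.coe_eq_coe] at h
  haveI : IsAntisymm ℝ (fun a b => b ≤ a) := ⟨fun _ _ h1 h2 => le_antisymm h2 h1⟩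
  have su : (List.ofFn u).Pairwise (fun a b => b ≤ a) :=
    List.pairwise_ofFn.mpr fun i j hij => hu hij.le
  have sv : (List.ofFn v).Pairwise (fun a b => b ≤ a) :=
    List.pairwise_ofFn.mpr fun i j hij => hv hij.le
  exact List.ofFn_injective (List.Perm.eq_of_pairwise (fun _ _ _ _ h1 h2 => le_antisymm h2 h1) su sv h)

theorem sortedEigs_def {M : Matrix (Fin N) (Fin N) ℝ} (hM : M.IsHermitian) :
    sortedEigs M = fun i => hM.eigenvalues (Tuple.sort hM.eigenvalues i.rev) := dif_pos hM

theorem sortedEigs_antitone {M : Matrix (Fin N) (Fin N) ℝ} (hM : M.IsHermitian) :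
    Antitone (sortedEigs M) := by
  rw [sortedEigs_def hM]
  intro i j hij
  exact Tuple.monotone_sort hM.eigenvalues (by simpa using hij)

theorem map_univ_perm (e : Equiv.Perm (Fin N)) :
    Multiset.map (⇑e) Finset.univ.val = Finset.univ.val := by
  calc Multiset.map (⇑e) Finset.univ.val = (Finset.univ.map e.toEmbedding).val := by
        rw [Finset.map_val]; rfl
    _ = Finset.univ.val := by rw [Finset.map_univ_equiv]

theorem sortedEigs_multiset {M : Matrix (Fin N) (Fin N) ℝ} (hM : M.IsHermitian) :
    Finset.univ.val.map (sortedEigs M) = Finset.univ.val.map hM.eigenvalues := by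
  rw [sortedEigs_def hM]
  have : (fun i => hM.eigenvalues (Tuple.sort hM.eigenvalues i.rev))
      = hM.eigenvalues ∘ ⇑(Fin.revPerm.trans (Tuple.sort hM.eigenvalues)) := rfl
  rw [this, ← Multiset.map_map]
  congr 1
  exact map_univ_perm _

theorem sortedEigs_eq_of {M : Matrix (Fin N) (Fin N) ℝ} (hM : M.IsHermitian)
    {v : Fin N → ℝ} (hv : Antitone v)
    (h : Finset.univ.val.map v = Finset.univ.val.map hM.eigenvalues) : sortedEigs M = v :=
  antitone_unique (sortedEigs_antitone hM) hv ((sortedEigs_multiset hM).trans h.symm)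

theorem cfc_repr {A : Matrix (Fin N) (Fin N) ℝ} (hA : A.IsHermitian) (f : ℝ → ℝ) :
    hA.cfc f = (hA.eigenvectorUnitary : Matrix (Fin N) (Fin N) ℝ) *
      Matrix.diagonal (f ∘ hA.eigenvalues)
      * star (hA.eigenvectorUnitary : Matrix (Fin N) (Fin N) ℝ) := by
  rw [Matrix.IsHermitian.cfc]
  simp [RCLike.ofReal_real_eq_id, Function.comp_def]

theorem cfc_herm {A : Matrix (Fin N) (Fin N) ℝ} (hA : A.IsHermitian) (f : ℝ → ℝ) :
    (hA.cfc f).IsHermitian := by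
  rw [cfc_repr hA f]
  apply Matrix.isHermitian_mul_mul_conjTranspose
  exact Matrix.isHermitian_diagonal _

theorem smul_repr {A : Matrix (Fin N) (Fin N) ℝ} (hA : A.IsHermitian) (c : ℝ) :
    c • A = (hA.eigenvectorUnitary : Matrix (Fin N) (Fin N) ℝ) *
      Matrix.diagonal (c • hA.eigenvalues)
      * star (hA.eigenvectorUnitary : Matrix (Fin N) (Fin N) ℝ) := by
  have hs := hA.spectral_theorem
  simp only [RCLike.ofReal_real_eq_id, Function.id_comp, Unitary.conjStarAlgAut_apply] at hs
  conv_lhs => rw [hs]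
  rw [Matrix.diagonal_smul, mul_smul_comm, smul_mul_assoc]

theorem smul_herm {A : Matrix (Fin N) (Fin N) ℝ} (hA : A.IsHermitian) (c : ℝ) :
    (c • A).IsHermitian := by
  rw [smul_repr hA c]
  apply Matrix.isHermitian_mul_mul_conjTranspose
  exact Matrix.isHermitian_diagonal _

theorem sortedEigs_cfc {A : Matrix (Fin N) (Fin N) ℝ} (hA : A.IsHermitian) (f : ℝ → ℝ)
    (hmono : Antitone (fun i => f (sortedEigs A i))) :
    sortedEigs (hA.cfc f) = fun i => f (sortedEigs A i) := by
  apply sortedEigs_eq_of (cfc_herm hA f) hmono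
  calc Finset.univ.val.map (fun i => f (sortedEigs A i))
      = (Finset.univ.val.map (sortedEigs A)).map f := by rw [Multiset.map_map]; rfl
    _ = (Finset.univ.val.map hA.eigenvalues).map f := by rw [sortedEigs_multiset hA]
    _ = Finset.univ.val.map (f ∘ hA.eigenvalues) := by rw [Multiset.map_map]
    _ = Finset.univ.val.map (cfc_herm hA f).eigenvalues :=
        (eig_multiset (cfc_herm hA f) hA.eigenvectorUnitary _ (cfc_repr hA f)).symm

theorem sortedEigs_smul {A : Matrix (Fin N) (Fin N) ℝ} (hA : A.IsHermitian) {c : ℝ}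
    (hc : 0 ≤ c) : sortedEigs (c • A) = fun i => c * sortedEigs A i := by
  apply sortedEigs_eq_of (smul_herm hA c)
    (fun i j hij => mul_le_mul_of_nonneg_left (sortedEigs_antitone hA hij) hc)
  calc Finset.univ.val.map (fun i => c * sortedEigs A i)
      = (Finset.univ.val.map (sortedEigs A)).map (fun x => c * x) := by
        rw [Multiset.map_map]; rfl
    _ = (Finset.univ.val.map hA.eigenvalues).map (fun x => c * x) := by
        rw [sortedEigs_multiset hA]
    _ = Finset.univ.val.map (c • hA.eigenvalues) := by rw [Multiset.map_map]; rfl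
    _ = Finset.univ.val.map (smul_herm hA c).eigenvalues :=
        (eig_multiset (smul_herm hA c) hA.eigenvectorUnitary _ (smul_repr hA c)).symm

theorem sortedEigs_zero : sortedEigs (0 : Matrix (Fin N) (Fin N) ℝ) = fun _ => 0 := by
  apply sortedEigs_eq_of Matrix.isHermitian_zero (fun _ _ _ => le_refl 0)
  symm
  have := eig_multiset (Matrix.isHermitian_zero :
      (0 : Matrix (Fin N) (Fin N) ℝ).IsHermitian)
    (1 : Matrix.unitaryGroup (Fin N) ℝ) (fun _ => 0) (by simp)
  simpa using this

theorem sum_sortedEigs {M : Matrix (Fin N) (Fin N) ℝ} (hM : M.IsHermitian) :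
    ∑ i, sortedEigs M i = M.trace := by
  have h1 : ∑ i, sortedEigs M i = (Finset.univ.val.map (sortedEigs M)).sum := rfl
  have h2 : ∑ i, hM.eigenvalues i = (Finset.univ.val.map hM.eigenvalues).sum := rfl
  have h3 : M.trace = ∑ i, hM.eigenvalues i := by
    have hs := hM.spectral_theorem
    simp only [RCLike.ofReal_real_eq_id, Function.id_comp, Unitary.conjStarAlgAut_apply] at hs
    conv_lhs => rw [hs]
    rw [Matrix.trace_mul_cycle,
      Unitary.star_mul_self_of_mem hM.eigenvectorUnitary.2, Matrix.one_mul,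
      Matrix.trace_diagonal]
  rw [h1, sortedEigs_multiset hM, h3, h2]

theorem card_filter_lt {k : ℕ} (hk : k ≤ N) :
    (Finset.univ.filter (fun i : Fin N => i.val < k)).card = k := by
  have : (Finset.univ.filter (fun i : Fin N => i.val < k))
      = Finset.map (Fin.castLEEmb hk) Finset.univ := by
    ext i
    simp only [Finset.mem_filter, Finset.mem_map, Finset.mem_univ, true_and]
    constructor
    · intro hi; exact ⟨⟨i.val, hi⟩, by simp [Fin.castLEEmb, Fin.castLE]⟩
    · rintro ⟨j, hj⟩; rw [← hj]; simp [Fin.castLEEmb, Fin.castLE]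
  rw [this, Finset.card_map, Finset.card_univ, Fintype.card_fin]

theorem sum_mul_le_topk {k : ℕ} (hk : k ≤ N) (w d : Fin N → ℝ) (hw : Antitone w)
    (hd0 : ∀ i, 0 ≤ d i) (hd1 : ∀ i, d i ≤ 1) (hsum : ∑ i, d i = k) :
    ∑ i, w i * d i ≤ ∑ i ∈ Finset.univ.filter (fun i : Fin N => i.val < k), w i := by
  rcases eq_or_lt_of_le hk with heq | hklt
  · subst heq
    have hall : ∀ i, d i = 1 := by
      have h0 : ∑ i : Fin k, (1 - d i) = 0 := by
        rw [Finset.sum_sub_distrib, hsum]; simp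
      intro i
      have := (Finset.sum_eq_zero_iff_of_nonneg (fun j _ => by linarith [hd1 j])).mp h0 i
        (Finset.mem_univ i)
      linarith
    have hfilt : Finset.univ.filter (fun i : Fin k => i.val < k) = Finset.univ := by
      ext i; simp [i.isLt]
    rw [hfilt]
    apply Finset.sum_le_sum
    intro i _
    rw [hall i, mul_one]
  · set t := w ⟨k, hklt⟩ with ht
    set s := Finset.univ.filter (fun i : Fin N => i.val < k) with hs
    have hsplit : ∑ i, w i * d i = ∑ i ∈ s, w i * d i + ∑ i ∈ sᶜ, w i * d i :=
      (Finset.sum_add_sum_compl s _).symm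
    have hcard : ∑ _i ∈ s, (1 : ℝ) = k := by
      rw [Finset.sum_const, card_filter_lt hk]; simp
    have h1 : ∀ i ∈ s, w i * d i - w i ≤ t * (d i - 1) := by
      intro i hi
      simp only [hs, Finset.mem_filter, Finset.mem_univ, true_and] at hi
      have hwi : t ≤ w i := hw (Fin.le_def.mpr (le_of_lt hi))
      have : d i - 1 ≤ 0 := by linarith [hd1 i]
      nlinarith
    have h2 : ∀ i ∈ sᶜ, w i * d i ≤ t * d i := by
      intro i hi
      simp only [hs, Finset.mem_compl, Finset.mem_filter, Finset.mem_univ, true_and,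
        not_lt] at hi
      have hwi : w i ≤ t := hw (Fin.le_def.mpr hi)
      nlinarith [hd0 i]
    have bound : ∑ i ∈ s, (w i * d i - w i) + ∑ i ∈ sᶜ, w i * d i
        ≤ ∑ i ∈ s, t * (d i - 1) + ∑ i ∈ sᶜ, t * d i :=
      add_le_add (Finset.sum_le_sum h1) (Finset.sum_le_sum h2)
    have zero : ∑ i ∈ s, t * (d i - 1) + ∑ i ∈ sᶜ, t * d i = 0 := by
      rw [← Finset.mul_sum, ← Finset.mul_sum, ← mul_add]
      have hd' : ∑ i ∈ s, (d i - 1) + ∑ i ∈ sᶜ, d i = 0 := by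
        rw [Finset.sum_sub_distrib]
        have h3 := Finset.sum_add_sum_compl s d
        rw [hsum] at h3
        linarith [hcard]
      rw [hd', mul_zero]
    have key : ∑ i ∈ s, (w i * d i - w i) + ∑ i ∈ sᶜ, w i * d i
        = ∑ i, w i * d i - ∑ i ∈ s, w i := by
      rw [hsplit, Finset.sum_sub_distrib]; ring
    linarith [key ▸ bound]

theorem psd_diag_nonneg {Q : Matrix (Fin N) (Fin N) ℝ} (hQ : Q.PosSemidef) (i : Fin N) :
    0 ≤ Q i i := by
  have := hQ.dotProduct_mulVec_nonneg (Pi.single i 1)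
  simpa [Matrix.mulVec_single, single_dotProduct] using this

theorem trace_mul_proj_le {k : ℕ} (hk : k ≤ N) {B P : Matrix (Fin N) (Fin N) ℝ}
    (hB : B.IsHermitian) (hP : P.PosSemidef)
    (hIP : ((1 : Matrix (Fin N) (Fin N) ℝ) - P).PosSemidef)
    (htr : P.trace = k) :
    (B * P).trace ≤ ∑ i ∈ Finset.univ.filter (fun i : Fin N => i.val < k), sortedEigs B i := by
  set V := (hB.eigenvectorUnitary : Matrix (Fin N) (Fin N) ℝ) with hV
  set ν := hB.eigenvalues with hν
  set Q := star V * P * V with hQdef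
  have hVV : star V * V = 1 := Unitary.star_mul_self_of_mem hB.eigenvectorUnitary.2
  have hVV' : V * star V = 1 := Unitary.mul_star_self_of_mem hB.eigenvectorUnitary.2
  have hQpsd : Q.PosSemidef := by
    have := hP.conjTranspose_mul_mul_same V
    rwa [← Matrix.star_eq_conjTranspose] at this
  have hQI : ((1 : Matrix (Fin N) (Fin N) ℝ) - Q).PosSemidef := by
    have := hIP.conjTranspose_mul_mul_same V
    rw [← Matrix.star_eq_conjTranspose] at this
    have heq : star V * (1 - P) * V = 1 - Q := by
      rw [Matrix.mul_sub, Matrix.mul_one, Matrix.sub_mul, hVV]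
    rwa [heq] at this
  have hd0 : ∀ i, 0 ≤ Q i i := psd_diag_nonneg hQpsd
  have hd1 : ∀ i, Q i i ≤ 1 := by
    intro i
    have := psd_diag_nonneg hQI i
    have h1 : ((1 : Matrix (Fin N) (Fin N) ℝ) - Q) i i = 1 - Q i i := by
      simp [Matrix.sub_apply, Matrix.one_apply]
    linarith [h1 ▸ this]
  have hdsum : ∑ i, Q i i = (k : ℝ) := by
    have : ∑ i, Q i i = Q.trace := rfl
    rw [this, hQdef, Matrix.trace_mul_cycle, hVV', Matrix.one_mul, htr]
  have htrBP : (B * P).trace = ∑ i, ν i * Q i i := by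
    have hs := hB.spectral_theorem
    simp only [RCLike.ofReal_real_eq_id, Function.id_comp, Unitary.conjStarAlgAut_apply] at hs
    conv_lhs => rw [hs]
    have h4 : V * Matrix.diagonal ν * star V * P
        = V * (Matrix.diagonal ν * (star V * P)) := by
      rw [Matrix.mul_assoc, Matrix.mul_assoc]
    have h5 : (V * (Matrix.diagonal ν * (star V * P))).trace
        = (Matrix.diagonal ν * Q).trace := by
      rw [Matrix.trace_mul_comm]
      congr 1
      rw [Matrix.mul_assoc]
    rw [h4, h5]
    simp [Matrix.trace, Matrix.diag, Matrix.mul_apply, Matrix.diagonal_apply]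
  set ψ := Fin.revPerm.trans (Tuple.sort ν) with hψ
  have hw : sortedEigs B = fun i => ν (ψ i) := sortedEigs_def hB
  have hsum2 : ∑ i, ν i * Q i i = ∑ i, (sortedEigs B i) * Q (ψ i) (ψ i) := by
    rw [← Equiv.sum_comp ψ (fun i => ν i * Q i i)]
    simp [hw]
  rw [htrBP, hsum2]
  apply sum_mul_le_topk hk _ _ (sortedEigs_antitone hB) (fun i => hd0 _) (fun i => hd1 _)
  rw [Equiv.sum_comp ψ (fun i => Q i i), hdsum]
theorem kyfan_pair {k : ℕ} (hk : k ≤ N) {B C : Matrix (Fin N) (Fin N) ℝ}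
    (hB : B.IsHermitian) (hC : C.IsHermitian) :
    ∑ i ∈ Finset.univ.filter (fun i : Fin N => i.val < k), sortedEigs (B + C) i
      ≤ ∑ i ∈ Finset.univ.filter (fun i : Fin N => i.val < k), sortedEigs B i
        + ∑ i ∈ Finset.univ.filter (fun i : Fin N => i.val < k), sortedEigs C i := by
  have hM : (B + C).IsHermitian := hB.add hC
  set U := (hM.eigenvectorUnitary : Matrix (Fin N) (Fin N) ℝ) with hU
  set μ := hM.eigenvalues with hμ
  set σ := Tuple.sort μ with hσ
  have hUU : star U * U = 1 := Unitary.star_mul_self_of_mem hM.eigenvectorUnitary.2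
  have hUU' : U * star U = 1 := Unitary.mul_star_self_of_mem hM.eigenvectorUnitary.2
  set e : Fin N → ℝ := fun j => if ((σ.symm j).rev.val < k) then 1 else 0 with he
  set P := U * Matrix.diagonal e * star U with hP
  have he0 : ∀ j, 0 ≤ e j := by
    intro j
    show (0:ℝ) ≤ if ((σ.symm j).rev.val < k) then 1 else 0
    split <;> norm_num
  have he1 : ∀ j, e j ≤ 1 := by
    intro j
    show (if ((σ.symm j).rev.val < k) then (1:ℝ) else 0) ≤ 1
    split <;> norm_num
  have hPpsd : P.PosSemidef := by
    have := (Matrix.PosSemidef.diagonal (Pi.le_def.mpr he0 : (0 : Fin N → ℝ) ≤ e)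
      ).mul_mul_conjTranspose_same U
    rwa [← Matrix.star_eq_conjTranspose] at this
  have hIP : ((1 : Matrix (Fin N) (Fin N) ℝ) - P).PosSemidef := by
    have h1 : (1 : Matrix (Fin N) (Fin N) ℝ) - P
        = U * Matrix.diagonal (fun j => 1 - e j) * star U := by
      have : Matrix.diagonal (fun j => 1 - e j)
          = 1 - Matrix.diagonal e := by
        rw [← Matrix.diagonal_one, ← Matrix.diagonal_sub]
      rw [this, Matrix.mul_sub, Matrix.sub_mul, Matrix.mul_one, hUU', hP]
    rw [h1]
    have := (Matrix.PosSemidef.diagonal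
      (Pi.le_def.mpr (fun j => by have := he1 j; simp only [Pi.zero_apply]; linarith) :
        (0 : Fin N → ℝ) ≤ fun j => 1 - e j)).mul_mul_conjTranspose_same U
    rwa [← Matrix.star_eq_conjTranspose] at this
  set ψ := Fin.revPerm.trans σ with hψ
  have heψ : ∀ i : Fin N, e (ψ i) = if i.val < k then 1 else 0 := by
    intro i
    have h1 : e (ψ i) = if ((σ.symm (σ i.rev)).rev.val < k) then 1 else 0 := rfl
    rw [h1, Equiv.symm_apply_apply, Fin.rev_rev]
  have htrP : P.trace = (k : ℝ) := by
    rw [hP, Matrix.trace_mul_cycle, hUU, Matrix.one_mul, Matrix.trace_diagonal]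
    rw [← Equiv.sum_comp ψ e]
    simp only [heψ]
    rw [Finset.sum_boole]
    rw [card_filter_lt hk]
  have hMP : ((B + C) * P).trace
      = ∑ i ∈ Finset.univ.filter (fun i : Fin N => i.val < k), sortedEigs (B + C) i := by
    have hs := hM.spectral_theorem
    simp only [RCLike.ofReal_real_eq_id, Function.id_comp, Unitary.conjStarAlgAut_apply] at hs
    conv_lhs => rw [hs, hP]
    have hmid : (U * Matrix.diagonal μ * star U) * (U * Matrix.diagonal e * star U)
        = U * (Matrix.diagonal μ * Matrix.diagonal e) * star U := by
      simp only [Matrix.mul_assoc]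
      rw [← Matrix.mul_assoc (star U) U, hUU, Matrix.one_mul]
    rw [hmid, Matrix.diagonal_mul_diagonal, Matrix.trace_mul_cycle,
      hUU, Matrix.one_mul, Matrix.trace_diagonal]
    rw [← Equiv.sum_comp ψ (fun j => μ j * e j)]
    have hw : sortedEigs (B + C) = fun i => μ (ψ i) := sortedEigs_def hM
    simp only [heψ, hw, mul_ite, mul_one, mul_zero]
    rw [Finset.sum_ite, Finset.sum_const_zero, add_zero]
  have hsplit : ((B + C) * P).trace = (B * P).trace + (C * P).trace := by
    rw [Matrix.add_mul, Matrix.trace_add]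
  calc ∑ i ∈ Finset.univ.filter (fun i : Fin N => i.val < k), sortedEigs (B + C) i
      = (B * P).trace + (C * P).trace := by rw [← hsplit, hMP]
    _ ≤ _ := add_le_add (trace_mul_proj_le hk hB hPpsd hIP htrP)
          (trace_mul_proj_le hk hC hPpsd hIP htrP)

theorem herm_sum {ι : Type*} (s : Finset ι) (B : ι → Matrix (Fin N) (Fin N) ℝ)
    (hB : ∀ j ∈ s, (B j).IsHermitian) : (∑ j ∈ s, B j).IsHermitian := by
  unfold Matrix.IsHermitian
  rw [Matrix.conjTranspose_sum]
  exact Finset.sum_congr rfl hB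

theorem kyfan_sum {ι : Type*} {k : ℕ} (hk : k ≤ N) (s : Finset ι)
    (B : ι → Matrix (Fin N) (Fin N) ℝ) (hB : ∀ j, (B j).IsHermitian) :
    ∑ i ∈ Finset.univ.filter (fun i : Fin N => i.val < k), sortedEigs (∑ j ∈ s, B j) i
      ≤ ∑ j ∈ s, ∑ i ∈ Finset.univ.filter (fun i : Fin N => i.val < k), sortedEigs (B j) i := by
  induction s using Finset.cons_induction with
  | empty => simp [sortedEigs_zero]
  | cons a s ha ih =>
    rw [Finset.sum_cons, Finset.sum_cons]
    calc ∑ i ∈ Finset.univ.filter (fun i : Fin N => i.val < k), sortedEigs (B a + ∑ j ∈ s, B j) i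
        ≤ ∑ i ∈ Finset.univ.filter (fun i : Fin N => i.val < k), sortedEigs (B a) i
          + ∑ i ∈ Finset.univ.filter (fun i : Fin N => i.val < k), sortedEigs (∑ j ∈ s, B j) i :=
          kyfan_pair hk (hB a) (herm_sum s B fun j _ => hB j)
      _ ≤ _ := add_le_add_right ih _

end KyFanAux


/-- for `A_1, …, A_m ∈ P_n`,
`λ(exp((1/m) ∑_j log A_j)) ≺_log` the entrywise geometric mean of the eigenvalue vectors:
for every `k ≤ n`, `∏_{i<k} λ_i(exp((1/m) ∑_j log A_j)) ≤ ∏_{i<k} ∏_j λ_i(A_j)^{1/m}`,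
with equality for `k = n`. -/
theorem log_majorization_exp_mean_log
    (n m : ℕ) (A : Fin m → Matrix (Fin n) (Fin n) ℝ) (hA : ∀ j, (A j).PosDef) :
    (∀ k : ℕ, k ≤ n →
      ∏ i ∈ Finset.univ.filter (fun i : Fin n => i.val < k),
          sortedEigs (matExp ((1 / (m : ℝ)) • ∑ j, matLog (A j))) i
        ≤ ∏ i ∈ Finset.univ.filter (fun i : Fin n => i.val < k),
            ∏ j, sortedEigs (A j) i ^ (1 / (m : ℝ))) ∧
    (∏ i : Fin n, sortedEigs (matExp ((1 / (m : ℝ)) • ∑ j, matLog (A j))) i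
      = ∏ i : Fin n, ∏ j, sortedEigs (A j) i ^ (1 / (m : ℝ))) := by
  classical
  have hc0 : (0 : ℝ) ≤ 1 / (m : ℝ) := by positivity
  have hAh : ∀ j, (A j).IsHermitian := fun j => (hA j).1
  have hLj : ∀ j, matLog (A j) = ((hAh j).cfc Real.log) := by
    intro j; simp only [matLog, matFun, dif_pos (hAh j)]
  have hLherm : ∀ j, (matLog (A j)).IsHermitian := by
    intro j; rw [hLj j]; exact KyFanAux.cfc_herm _ _
  set S := ∑ j, matLog (A j) with hSdef
  have hSherm : S.IsHermitian := KyFanAux.herm_sum _ _ (fun j _ => hLherm j)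
  set X := (1 / (m : ℝ)) • S with hXdef
  have hXherm : X.IsHermitian := KyFanAux.smul_herm hSherm _
  have hpos : ∀ j i, 0 < sortedEigs (A j) i := by
    intro j i
    rw [KyFanAux.sortedEigs_def (hAh j)]
    exact (hA j).eigenvalues_pos _
  have hlog : ∀ j, sortedEigs (matLog (A j)) = fun i => Real.log (sortedEigs (A j) i) := by
    intro j
    rw [hLj j]
    apply KyFanAux.sortedEigs_cfc
    intro i i' hii'
    exact Real.log_le_log (hpos j i') (KyFanAux.sortedEigs_antitone (hAh j) hii')
  have hscale : sortedEigs X = fun i => (1 / (m : ℝ)) * sortedEigs S i :=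
    KyFanAux.sortedEigs_smul hSherm hc0
  have hExp : matExp X = hXherm.cfc Real.exp := by simp only [matExp, matFun, dif_pos hXherm]
  have hE : sortedEigs (matExp X) = fun i => Real.exp (sortedEigs X i) := by
    rw [hExp]
    apply KyFanAux.sortedEigs_cfc
    intro i i' h
    exact Real.exp_le_exp.mpr (KyFanAux.sortedEigs_antitone hXherm h)
  -- rearrangement identity used on both sides
  have swap : ∀ s : Finset (Fin n),
      (1 / (m : ℝ)) * ∑ j, ∑ i ∈ s, sortedEigs (matLog (A j)) i
        = ∑ i ∈ s, ∑ j, Real.log (sortedEigs (A j) i) * (1 / (m : ℝ)) := by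
    intro s
    calc (1 / (m : ℝ)) * ∑ j, ∑ i ∈ s, sortedEigs (matLog (A j)) i
        = ∑ j, ∑ i ∈ s, sortedEigs (matLog (A j)) i * (1 / (m : ℝ)) := by
          rw [Finset.mul_sum]
          exact Finset.sum_congr rfl fun j _ => by
            rw [Finset.mul_sum]
            exact Finset.sum_congr rfl fun i _ => mul_comm _ _
      _ = ∑ i ∈ s, ∑ j, sortedEigs (matLog (A j)) i * (1 / (m : ℝ)) := Finset.sum_comm
      _ = _ := Finset.sum_congr rfl fun i _ =>
            Finset.sum_congr rfl fun j _ => by rw [hlog j]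
  have hLprod : ∀ s : Finset (Fin n),
      ∏ i ∈ s, sortedEigs (matExp X) i = Real.exp (∑ i ∈ s, sortedEigs X i) := by
    intro s
    rw [Real.exp_sum]
    exact Finset.prod_congr rfl fun i _ => by rw [hE]
  have hRprod : ∀ s : Finset (Fin n),
      ∏ i ∈ s, ∏ j, sortedEigs (A j) i ^ (1 / (m : ℝ))
        = Real.exp (∑ i ∈ s, ∑ j, Real.log (sortedEigs (A j) i) * (1 / (m : ℝ))) := by
    intro s
    rw [Real.exp_sum]
    refine Finset.prod_congr rfl fun i _ => ?_
    rw [Real.exp_sum]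
    refine Finset.prod_congr rfl fun j _ => ?_
    rw [Real.rpow_def_of_pos (hpos j i)]
  constructor
  · intro k hk
    rw [hLprod, hRprod]
    apply Real.exp_le_exp.mpr
    have h2 := KyFanAux.kyfan_sum hk Finset.univ (fun j => matLog (A j)) hLherm
    rw [← hSdef] at h2
    calc ∑ i ∈ Finset.univ.filter (fun i : Fin n => i.val < k), sortedEigs X i
        = (1 / (m : ℝ)) * ∑ i ∈ Finset.univ.filter (fun i : Fin n => i.val < k),
            sortedEigs S i := by
          simp only [hscale]; rw [Finset.mul_sum]
      _ ≤ (1 / (m : ℝ)) * ∑ j, ∑ i ∈ Finset.univ.filter (fun i : Fin n => i.val < k),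
            sortedEigs (matLog (A j)) i := mul_le_mul_of_nonneg_left h2 hc0
      _ = _ := swap _
  · rw [show ∀ f : Fin n → ℝ, ∏ i : Fin n, f i = ∏ i ∈ Finset.univ, f i from fun _ => rfl]
    rw [hLprod, hRprod]
    congr 1
    have htr : ∑ i, sortedEigs S i = ∑ j, ∑ i, sortedEigs (matLog (A j)) i := by
      rw [KyFanAux.sum_sortedEigs hSherm, hSdef, Matrix.trace_sum]
      exact Finset.sum_congr rfl fun j _ => (KyFanAux.sum_sortedEigs (hLherm j)).symm
    calc ∑ i ∈ Finset.univ, sortedEigs X i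
        = (1 / (m : ℝ)) * ∑ i, sortedEigs S i := by
          simp only [hscale]; rw [Finset.mul_sum]
      _ = (1 / (m : ℝ)) * ∑ j, ∑ i, sortedEigs (matLog (A j)) i := by rw [htr]
      _ = _ := swap _
end
end
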